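/- Let G be a connected graph of order n with maximum reciprocal transmission RTr₁, let RQ(G) = RT(G) + RD(G) be the reciprocal distance signless Laplacian, and let ρ denote spectral radius. (i) For 0 ≤ α ≤ ½: (1−α)ρ(RQ(G)) + (2α−1)RTr₁ ≤ ρ(RD_α(G)) ≤ α·ρ(RQ(G)) + (1−2α)ρ(RD(G)). (ii) For ½ ≤ α ≤ 1: α·ρ(RQ(G)) + (1−2α)ρ(RD(G)) ≤ ρ(RD_α(G)) ≤ (1−α)ρ(RQ(G)) + (2α−1)RTr₁. -/

import Mathlib

open Matrix BigOperators Finset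

/-- The reciprocal distance (Harary) matrix of a graph. -/
noncomputable def RDmat {V : Type*} [Fintype V] [DecidableEq V] (G : SimpleGraph V) :
    Matrix V V ℝ :=
  Matrix.of fun i j => if i = j then 0 else (1 : ℝ) / (G.dist i j)

/-- The reciprocal transmission of a vertex. -/
noncomputable def RTr {V : Type*} [Fintype V] [DecidableEq V] (G : SimpleGraph V) (v : V) : ℝ :=
  ∑ u ∈ Finset.univ.erase v, (1 : ℝ) / (G.dist u v)

/-- The generalized reciprocal distance matrix `RD_α(G) = α RT(G) + (1-α) RD(G)`. -/
noncomputable def RDalpha {V : Type*} [Fintype V] [DecidableEq V] (G : SimpleGraph V) (α : ℝ) :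
    Matrix V V ℝ :=
  α • Matrix.diagonal (RTr G) + (1 - α) • RDmat G

/-- The `i`-th largest eigenvalue (1-indexed, with multiplicity) of a real matrix,
obtained from the roots of its characteristic polynomial sorted decreasingly. -/
noncomputable def eigDesc {V : Type*} [Fintype V] [DecidableEq V] (M : Matrix V V ℝ) (i : ℕ) : ℝ :=
  ((M.charpoly.roots.sort (· ≤ ·)).reverse).getD (i - 1) 0

/-- The spectral radius (largest eigenvalue) of a real symmetric matrix. -/
noncomputable def specRadius {V : Type*} [Fintype V] [DecidableEq V] (M : Matrix V V ℝ) : ℝ :=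
  eigDesc M 1

/-- The join of two graphs. -/
def gjoin {V₁ V₂ : Type*} (G₁ : SimpleGraph V₁) (G₂ : SimpleGraph V₂) :
    SimpleGraph (V₁ ⊕ V₂) where
  Adj x y := match x, y with
    | Sum.inl a, Sum.inl b => G₁.Adj a b
    | Sum.inr a, Sum.inr b => G₂.Adj a b
    | Sum.inl _, Sum.inr _ => True
    | Sum.inr _, Sum.inl _ => True
  symm := ⟨by rintro (a|a) (b|b) h <;> first | exact G₁.adj_symm h | exact G₂.adj_symm h | trivial⟩
  loopless := ⟨by rintro (a|a) h <;> first | exact G₁.irrefl h | exact G₂.irrefl h⟩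

section Aux

open Polynomial

variable {n : Type*} [Fintype n] [DecidableEq n]

private lemma charpoly_conj' (P Q A : Matrix n n ℝ) (h1 : P * Q = 1) :
    (P * A * Q).charpoly = A.charpoly := by
  have hmap : ∀ M N : Matrix n n ℝ, ((C : ℝ →+* ℝ[X]).mapMatrix (M * N)) =
      (C : ℝ →+* ℝ[X]).mapMatrix M * (C : ℝ →+* ℝ[X]).mapMatrix N := fun M N => map_mul _ _ _
  have hone : (C : ℝ →+* ℝ[X]).mapMatrix (1 : Matrix n n ℝ) = 1 := _root_.map_one _
  have key : charmatrix (P * A * Q) =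
      (C : ℝ →+* ℝ[X]).mapMatrix P * charmatrix A * (C : ℝ →+* ℝ[X]).mapMatrix Q := by
    unfold charmatrix
    rw [mul_sub, sub_mul]
    congr 1
    · rw [mul_assoc, (scalar_commute (X : ℝ[X]) (Commute.all _) _).eq, ← mul_assoc, ← hmap,
        h1, hone, one_mul]
    · rw [hmap, hmap]
  rw [Matrix.charpoly, key, det_mul, det_mul, mul_right_comm, ← det_mul, ← hmap, h1, hone,
    det_one, one_mul, Matrix.charpoly]

private lemma charpoly_diag' (d : n → ℝ) :
    (Matrix.diagonal d).charpoly = ((Finset.univ.val.map d).map fun a => X - C a).prod := by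
  have : charmatrix (Matrix.diagonal d) = Matrix.diagonal fun i => (X : ℝ[X]) - C (d i) := by
    ext i j
    by_cases h : i = j
    · subst h; simp [charmatrix_apply]
    · simp [charmatrix_apply, Matrix.diagonal_apply_ne _ h]
  rw [Matrix.charpoly, this, det_diagonal, Multiset.map_map, Finset.prod_eq_multiset_prod]
  rfl

private lemma roots_charpoly_symm' (A : Matrix n n ℝ) (hA : A.IsHermitian) :
    A.charpoly.roots = Finset.univ.val.map hA.eigenvalues := by
  have hcoe : ((RCLike.ofReal : ℝ → ℝ) ∘ hA.eigenvalues) = hA.eigenvalues :=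
    funext fun i => rfl
  have hu := hA.spectral_theorem
  rw [hcoe, Unitary.conjStarAlgAut_apply] at hu
  conv_lhs => rw [hu]
  set U := (hA.eigenvectorUnitary : Matrix n n ℝ)
  have h1 : U * star U = 1 := Matrix.mem_unitaryGroup_iff.mp hA.eigenvectorUnitary.2
  rw [charpoly_conj' U (star U) _ h1, charpoly_diag', roots_multiset_prod_X_sub_C]

private lemma sort_reverse_head_max' (s : Multiset ℝ) (hs : s ≠ 0) :
    ((s.sort (· ≤ ·)).reverse.getD 0 0) ∈ s ∧
      ∀ x ∈ s, x ≤ ((s.sort (· ≤ ·)).reverse.getD 0 0) := by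
  set l := s.sort (· ≤ ·) with hl
  have hmem : ∀ x : ℝ, x ∈ l ↔ x ∈ s := fun x => Multiset.mem_sort _
  have hsorted : l.Pairwise (· ≤ ·) := Multiset.pairwise_sort _ _
  have hne : l.reverse ≠ [] := by
    simp only [ne_eq, List.reverse_eq_nil_iff]
    intro h
    apply hs
    rw [← Multiset.sort_eq s (· ≤ ·), ← hl, h]; rfl
  have hrev : l.reverse.Pairwise (fun a b => b ≤ a) := by
    rw [List.pairwise_reverse]; exact hsorted
  obtain ⟨a, t, hat⟩ := List.exists_cons_of_ne_nil hne
  rw [hat] at hrev ⊢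
  rw [List.pairwise_cons] at hrev
  constructor
  · rw [← hmem, ← List.mem_reverse, hat]
    simp
  · intro x hx
    rw [← hmem, ← List.mem_reverse, hat] at hx
    rcases List.mem_cons.mp hx with h | h
    · simp [h]
    · simpa using hrev.1 x h

variable [Nonempty n]

private lemma specRadius_eq_sup' (A : Matrix n n ℝ) (hA : A.IsHermitian) :
    specRadius A = Finset.univ.sup' Finset.univ_nonempty hA.eigenvalues := by
  have hs : A.charpoly.roots ≠ 0 := by
    rw [roots_charpoly_symm' A hA]
    intro h
    rw [Multiset.map_eq_zero] at h
    exact Finset.univ_nonempty.ne_empty (Finset.val_eq_zero.mp h)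
  obtain ⟨hmem, hub⟩ := sort_reverse_head_max' _ hs
  rw [roots_charpoly_symm' A hA] at hmem hub
  unfold specRadius eigDesc
  rw [roots_charpoly_symm' A hA]
  apply le_antisymm
  · obtain ⟨i, _, hi⟩ := Multiset.mem_map.mp hmem
    rw [← hi]
    exact Finset.le_sup' _ (Finset.mem_univ i)
  · apply Finset.sup'_le
    intro i _
    exact hub _ (Multiset.mem_map_of_mem _ (Finset.mem_univ_val i))

private lemma quad_conj' (U D : Matrix n n ℝ) (x : n → ℝ) :
    x ⬝ᵥ ((U * D * star U) *ᵥ x) = (Uᵀ *ᵥ x) ⬝ᵥ (D *ᵥ (Uᵀ *ᵥ x)) := by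
  have hstar : star U = Uᵀ := U.conjTranspose_eq_transpose_of_trivial
  rw [hstar, ← mulVec_mulVec, ← mulVec_mulVec, dotProduct_mulVec x U, ← mulVec_transpose]

private lemma quad_norm' (U : Matrix n n ℝ) (hU : U * star U = 1) (x : n → ℝ) :
    (Uᵀ *ᵥ x) ⬝ᵥ (Uᵀ *ᵥ x) = x ⬝ᵥ x := by
  have hstar : star U = Uᵀ := U.conjTranspose_eq_transpose_of_trivial
  rw [hstar] at hU
  rw [dotProduct_mulVec _ Uᵀ x, vecMul_transpose, mulVec_mulVec, hU, one_mulVec]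

private lemma quad_diag' (d : n → ℝ) (y : n → ℝ) :
    y ⬝ᵥ ((Matrix.diagonal d) *ᵥ y) = ∑ i, d i * y i ^ 2 := by
  simp only [dotProduct, mulVec_diagonal]
  exact Finset.sum_congr rfl fun i _ => by ring

private lemma dot_self_eq' (y : n → ℝ) : y ⬝ᵥ y = ∑ i, y i ^ 2 :=
  Finset.sum_congr rfl fun i _ => by ring

private lemma quad_diag_le' (d : n → ℝ) (y : n → ℝ) (S : ℝ) (hS : ∀ i, d i ≤ S) :
    y ⬝ᵥ ((Matrix.diagonal d) *ᵥ y) ≤ S * (y ⬝ᵥ y) := by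
  rw [quad_diag', dot_self_eq', Finset.mul_sum]
  exact Finset.sum_le_sum fun i _ => mul_le_mul_of_nonneg_right (hS i) (sq_nonneg _)

/-- Rayleigh quotient upper bound. -/
private lemma rayleigh_le' (A : Matrix n n ℝ) (hA : A.IsHermitian) (x : n → ℝ) :
    x ⬝ᵥ (A *ᵥ x) ≤ specRadius A * (x ⬝ᵥ x) := by
  have hcoe : ((RCLike.ofReal : ℝ → ℝ) ∘ hA.eigenvalues) = hA.eigenvalues :=
    funext fun i => rfl
  have hu := hA.spectral_theorem
  rw [hcoe, Unitary.conjStarAlgAut_apply] at hu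
  set U := (hA.eigenvectorUnitary : Matrix n n ℝ) with hU
  have h1 : U * star U = 1 := Matrix.mem_unitaryGroup_iff.mp hA.eigenvectorUnitary.2
  conv_lhs => rw [hu]
  rw [quad_conj', ← quad_norm' U h1 x]
  apply quad_diag_le'
  intro i
  rw [specRadius_eq_sup' A hA]
  exact Finset.le_sup' _ (Finset.mem_univ i)

/-- There is a unit vector achieving the spectral radius. -/
private lemma exists_unit_vec' (A : Matrix n n ℝ) (hA : A.IsHermitian) :
    ∃ v : n → ℝ, v ⬝ᵥ v = 1 ∧ v ⬝ᵥ (A *ᵥ v) = specRadius A := by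
  obtain ⟨j, _, hj⟩ := Finset.exists_mem_eq_sup' Finset.univ_nonempty hA.eigenvalues
  refine ⟨⇑(hA.eigenvectorBasis j), ?_, ?_⟩
  · have h := hA.eigenvectorBasis.orthonormal.1 j
    have h2 : (inner ℝ (hA.eigenvectorBasis j) (hA.eigenvectorBasis j) : ℝ) = 1 := by
      rw [real_inner_self_eq_norm_sq, h]; norm_num
    rw [← h2, PiLp.inner_apply]
    simp [dotProduct, sq]
  · have h := hA.mulVec_eigenvectorBasis j
    rw [h, dotProduct_smul, smul_eq_mul]
    have h2 : (inner ℝ (hA.eigenvectorBasis j) (hA.eigenvectorBasis j) : ℝ) = 1 := by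
      rw [real_inner_self_eq_norm_sq, hA.eigenvectorBasis.orthonormal.1 j]; norm_num
    have h3 : ⇑(hA.eigenvectorBasis j) ⬝ᵥ ⇑(hA.eigenvectorBasis j) = 1 := by
      rw [← h2, PiLp.inner_apply]; simp [dotProduct, sq]
    rw [h3, mul_one, specRadius_eq_sup' A hA, hj]

private lemma quad_two' (a b : ℝ) (M N : Matrix n n ℝ) (v : n → ℝ) :
    v ⬝ᵥ ((a • M + b • N) *ᵥ v)
      = a * (v ⬝ᵥ (M *ᵥ v)) + b * (v ⬝ᵥ (N *ᵥ v)) := by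
  rw [add_mulVec, smul_mulVec, smul_mulVec, dotProduct_add, dotProduct_smul,
    dotProduct_smul, smul_eq_mul, smul_eq_mul]

end Aux

/-- Proposition 3.8: bounds for `ρ(RD_α(G))` in terms of `ρ(RQ(G))`, `ρ(RD(G))` and the
maximum reciprocal transmission `RTr₁`. -/
theorem stmt11 {V : Type*} [Fintype V] [DecidableEq V] (G : SimpleGraph V) (hG : G.Connected)
    (α : ℝ) :
    (0 ≤ α → α ≤ 1 / 2 →
      (1 - α) * specRadius (Matrix.diagonal (RTr G) + RDmat G)
          + (2 * α - 1) * Finset.univ.sup' (Finset.univ_nonempty_iff.mpr hG.nonempty) (RTr G)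
        ≤ specRadius (RDalpha G α) ∧
      specRadius (RDalpha G α)
        ≤ α * specRadius (Matrix.diagonal (RTr G) + RDmat G)
          + (1 - 2 * α) * specRadius (RDmat G)) ∧
    (1 / 2 ≤ α → α ≤ 1 →
      α * specRadius (Matrix.diagonal (RTr G) + RDmat G)
          + (1 - 2 * α) * specRadius (RDmat G)
        ≤ specRadius (RDalpha G α) ∧
      specRadius (RDalpha G α)
        ≤ (1 - α) * specRadius (Matrix.diagonal (RTr G) + RDmat G)
          + (2 * α - 1) * Finset.univ.sup' (Finset.univ_nonempty_iff.mpr hG.nonempty) (RTr G)) := by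
  have : Nonempty V := hG.nonempty
  set T := Matrix.diagonal (RTr G) with hT
  set D := RDmat G with hD
  set RQ := T + D with hRQ
  -- Hermitian facts
  have hDh : D.IsHermitian := by
    rw [Matrix.IsHermitian, conjTranspose_eq_transpose_of_trivial]
    ext i j
    simp only [transpose_apply, hD, RDmat, of_apply]
    rw [SimpleGraph.dist_comm]
    by_cases h : i = j <;> simp [h, eq_comm]
  have hTh : T.IsHermitian := isHermitian_diagonal _
  have hRQh : RQ.IsHermitian := hTh.add hDh
  have hAh : (RDalpha G α).IsHermitian := by
    unfold RDalpha
    show (α • T + (1 - α) • D)ᴴ = _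
    rw [conjTranspose_add, conjTranspose_smul, conjTranspose_smul, hTh, hDh,
      star_trivial, star_trivial]
  -- two decompositions of RDalpha
  have e1 : RDalpha G α = α • RQ + (1 - 2 * α) • D := by
    unfold RDalpha; rw [hRQ]
    module
  have e2 : RDalpha G α = (1 - α) • RQ + (2 * α - 1) • T := by
    unfold RDalpha; rw [hRQ]
    module
  -- RTr₁ bound
  set RTr₁ := Finset.univ.sup' (Finset.univ_nonempty_iff.mpr hG.nonempty) (RTr G) with hR1
  have hTquad : ∀ v : V → ℝ, v ⬝ᵥ v = 1 → v ⬝ᵥ (T *ᵥ v) ≤ RTr₁ := by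
    intro v hv
    have := quad_diag_le' (RTr G) v RTr₁ fun i => Finset.le_sup' _ (Finset.mem_univ i)
    rwa [hv, mul_one] at this
  have hray : ∀ (M : Matrix V V ℝ), M.IsHermitian → ∀ v : V → ℝ, v ⬝ᵥ v = 1 →
      v ⬝ᵥ (M *ᵥ v) ≤ specRadius M := by
    intro M hM v hv
    have := rayleigh_le' M hM v
    rwa [hv, mul_one] at this
  constructor
  · intro h0 h12
    constructor
    · -- lower bound, α ≤ 1/2
      obtain ⟨v, hv1, hv2⟩ := exists_unit_vec' RQ hRQh
      have key : (1 - α) * specRadius RQ + (2 * α - 1) * RTr₁ ≤ v ⬝ᵥ (RDalpha G α *ᵥ v) := by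
        rw [e2, quad_two', hv2]
        have h1 : (2 * α - 1) * RTr₁ ≤ (2 * α - 1) * (v ⬝ᵥ (T *ᵥ v)) :=
          mul_le_mul_of_nonpos_left (hTquad v hv1) (by linarith)
        linarith
      exact key.trans (hray _ hAh v hv1)
    · -- upper bound, α ≤ 1/2
      obtain ⟨v, hv1, hv2⟩ := exists_unit_vec' (RDalpha G α) hAh
      rw [← hv2, e1, quad_two']
      have h1 : α * (v ⬝ᵥ (RQ *ᵥ v)) ≤ α * specRadius RQ :=
        mul_le_mul_of_nonneg_left (hray _ hRQh v hv1) h0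
      have h2 : (1 - 2 * α) * (v ⬝ᵥ (D *ᵥ v)) ≤ (1 - 2 * α) * specRadius D :=
        mul_le_mul_of_nonneg_left (hray _ hDh v hv1) (by linarith)
      linarith
  · intro h12 h1
    constructor
    · -- lower bound, α ≥ 1/2
      obtain ⟨v, hv1, hv2⟩ := exists_unit_vec' RQ hRQh
      have key : α * specRadius RQ + (1 - 2 * α) * specRadius D ≤ v ⬝ᵥ (RDalpha G α *ᵥ v) := by
        rw [e1, quad_two', hv2]
        have h2 : (1 - 2 * α) * specRadius D ≤ (1 - 2 * α) * (v ⬝ᵥ (D *ᵥ v)) :=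
          mul_le_mul_of_nonpos_left (hray _ hDh v hv1) (by linarith)
        linarith
      exact key.trans (hray _ hAh v hv1)
    · -- upper bound, α ≥ 1/2
      obtain ⟨v, hv1, hv2⟩ := exists_unit_vec' (RDalpha G α) hAh
      rw [← hv2, e2, quad_two']
      have ha : (1 - α) * (v ⬝ᵥ (RQ *ᵥ v)) ≤ (1 - α) * specRadius RQ :=
        mul_le_mul_of_nonneg_left (hray _ hRQh v hv1) (by linarith)
      have hb : (2 * α - 1) * (v ⬝ᵥ (T *ᵥ v)) ≤ (2 * α - 1) * RTr₁ :=
        mul_le_mul_of_nonneg_left (hTquad v hv1) (by linarith)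
      linarith
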